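/- Let $W$ be a natural number, $p \in (0,1]$, and $a > 0$ a real number. Let $\widehat{W} \sim \mathrm{Bin}(W, p)$, and define $f(s) = \frac{s + a + \sqrt{a^2 + 2 s a}}{p}$ for $s \ge 0$. Then $\Pr[f(\widehat{W}) < W] \le e^{-a}$. (In the paper, $a = c \log n$, giving failure probability $n^{-c}$.) -/

import Mathlib

open MeasureTheory ProbabilityTheory

/-- `Y ∼ Bin(t, p)`: the number of successes in `t` independent Bernoulli(`p`) trials. -/
def IsBinomial {Ω : Type*} [MeasurableSpace Ω] (μ : Measure Ω) (Y : Ω → ℕ) (t : ℕ) (p : ℝ) :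
    Prop :=
  Measurable Y ∧
    ∀ k : ℕ, μ {ω | Y ω = k} = ENNReal.ofReal ((t.choose k : ℝ) * p ^ k * (1 - p) ^ (t - k))

lemma exp_neg_le_quad {x : ℝ} (hx : 0 ≤ x) : Real.exp (-x) ≤ 1 - x + x ^ 2 / 2 := by
  have key : MonotoneOn (fun t : ℝ => 1 - t + t ^ 2 / 2 - Real.exp (-t)) (Set.Ici 0) := by
    apply monotoneOn_of_deriv_nonneg (convex_Ici 0)
    · fun_prop
    · fun_prop
    · intro t ht
      have ht' : 0 ≤ t := by simpa using interior_subset (s := Set.Ici (0:ℝ)) ht |>.out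
      have hd : HasDerivAt (fun t : ℝ => 1 - t + t ^ 2 / 2 - Real.exp (-t))
          (-1 + t + Real.exp (-t)) t := by
        have h1 : HasDerivAt (fun t : ℝ => Real.exp (-t)) (-Real.exp (-t)) t := by
          simpa [Function.comp_def] using (Real.hasDerivAt_exp (-t)).comp t (hasDerivAt_neg t)
        have h2 : HasDerivAt (fun t : ℝ => 1 - t + t ^ 2 / 2) (-1 + t) t := by
          have := ((hasDerivAt_id t).const_sub 1).add
            (((hasDerivAt_id t).pow 2).div_const 2)
          simpa [mul_comm, Pi.add_def] using this
        simpa [sub_eq_add_neg, Pi.add_def, Pi.neg_def] using h2.sub h1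
      rw [hd.deriv]
      nlinarith [Real.add_one_le_exp (-t)]
  have h0 : (fun t : ℝ => 1 - t + t ^ 2 / 2 - Real.exp (-t)) 0 ≤ _ :=
    key (Set.self_mem_Ici) hx hx
  simp at h0
  linarith

lemma chernoff_sum (W : ℕ) (p a : ℝ) (hp0 : 0 < p) (hp1 : p ≤ 1) (ha : 0 < a)
    (P : ℕ → Prop) [DecidablePred P]
    (hP : ∀ j, P j → (j : ℝ) + a + Real.sqrt (a ^ 2 + 2 * j * a) < W * p) :
    ∑ j ∈ (Finset.range (W + 1)).filter P,
      (W.choose j : ℝ) * p ^ j * (1 - p) ^ (W - j) ≤ Real.exp (-a) := by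
  rcases Nat.eq_zero_or_pos W with hW | hW
  · have : (Finset.range (W + 1)).filter P = ∅ := by
      subst hW
      rw [Finset.filter_eq_empty_iff]
      intro j hj hPj
      have := hP j hPj
      have hu : 0 ≤ Real.sqrt (a ^ 2 + 2 * j * a) := Real.sqrt_nonneg _
      have hj0 : (0:ℝ) ≤ (j:ℝ) := Nat.cast_nonneg _
      simp at this
      nlinarith
    rw [this]
    simp [Real.exp_pos, le_of_lt]
  · set m : ℝ := W * p with hm
    have hm0 : 0 < m := by positivity
    set t₀ : ℝ := Real.sqrt (2 * a * m) with ht₀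
    have ht₀0 : 0 < t₀ := Real.sqrt_pos.mpr (by positivity)
    have ht₀sq : t₀ ^ 2 = 2 * a * m := Real.sq_sqrt (by positivity)
    set lam : ℝ := t₀ / m with hlam
    have hlam0 : 0 < lam := by positivity
    have hkey : ∀ j : ℕ, P j → (j : ℝ) ≤ m - t₀ := by
      intro j hPj
      have h := hP j hPj
      have harg : (0:ℝ) ≤ a ^ 2 + 2 * j * a := by positivity
      have hu : Real.sqrt (a ^ 2 + 2 * j * a) ^ 2 = a ^ 2 + 2 * j * a :=
        Real.sq_sqrt harg
      have hu0 : 0 ≤ Real.sqrt (a ^ 2 + 2 * j * a) := Real.sqrt_nonneg _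
      set u := Real.sqrt (a ^ 2 + 2 * j * a)
      have ht : t₀ ^ 2 < (m - j) ^ 2 := by nlinarith
      nlinarith
    set q : ℝ := 1 - p with hq
    have hq0 : 0 ≤ q := by linarith
    have step1 : ∑ j ∈ (Finset.range (W + 1)).filter P,
        (W.choose j : ℝ) * p ^ j * q ^ (W - j)
        ≤ ∑ j ∈ Finset.range (W + 1),
          Real.exp (lam * (m - t₀)) * ((W.choose j : ℝ) * (p * Real.exp (-lam)) ^ j * q ^ (W - j)) := by
      apply le_trans (Finset.sum_le_sum (f := fun j => (W.choose j : ℝ) * p ^ j * q ^ (W - j))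
        (g := fun j => Real.exp (lam * (m - t₀)) * ((W.choose j : ℝ) * (p * Real.exp (-lam)) ^ j * q ^ (W - j)))
        ?_)
      · apply Finset.sum_le_sum_of_subset_of_nonneg (Finset.filter_subset _ _)
        intro j _ _
        positivity
      · intro j hj
        rw [Finset.mem_filter] at hj
        have hjle := hkey j hj.2
        have hone : (1:ℝ) ≤ Real.exp (lam * (m - t₀)) * Real.exp (-lam) ^ j := by
          rw [← Real.exp_nat_mul, ← Real.exp_add]
          rw [show (1:ℝ) = Real.exp 0 by simp]
          apply Real.exp_le_exp.mpr
          have : lam * (m - t₀) + (j : ℝ) * (-lam) = lam * ((m - t₀) - j) := by ring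
          rw [this]
          have : (0:ℝ) ≤ (m - t₀) - j := by linarith
          positivity
        have hb0 : (0:ℝ) ≤ (W.choose j : ℝ) * p ^ j * q ^ (W - j) := by positivity
        calc (W.choose j : ℝ) * p ^ j * q ^ (W - j)
            = 1 * ((W.choose j : ℝ) * p ^ j * q ^ (W - j)) := by ring
          _ ≤ (Real.exp (lam * (m - t₀)) * Real.exp (-lam) ^ j) *
              ((W.choose j : ℝ) * p ^ j * q ^ (W - j)) := by
              exact mul_le_mul_of_nonneg_right hone hb0
          _ = Real.exp (lam * (m - t₀)) * ((W.choose j : ℝ) * (p * Real.exp (-lam)) ^ j * q ^ (W - j)) := by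
              rw [mul_pow]; ring
    have step2 : ∑ j ∈ Finset.range (W + 1),
        Real.exp (lam * (m - t₀)) * ((W.choose j : ℝ) * (p * Real.exp (-lam)) ^ j * q ^ (W - j))
        = Real.exp (lam * (m - t₀)) * (p * Real.exp (-lam) + q) ^ W := by
      rw [← Finset.mul_sum, add_pow]
      congr 1
      apply Finset.sum_congr rfl
      intro j _
      ring
    have hbase0 : 0 ≤ p * Real.exp (-lam) + q := by positivity
    have step3 : (p * Real.exp (-lam) + q) ^ W ≤ Real.exp (m * (Real.exp (-lam) - 1)) := by
      have h1 : p * Real.exp (-lam) + q ≤ Real.exp (p * (Real.exp (-lam) - 1)) := by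
        have := Real.add_one_le_exp (p * (Real.exp (-lam) - 1))
        have heq : p * (Real.exp (-lam) - 1) + 1 = p * Real.exp (-lam) + q := by
          rw [hq]; ring
        linarith
      calc (p * Real.exp (-lam) + q) ^ W ≤ Real.exp (p * (Real.exp (-lam) - 1)) ^ W :=
            pow_le_pow_left₀ hbase0 h1 W
        _ = Real.exp (W * (p * (Real.exp (-lam) - 1))) := by
            rw [← Real.exp_nat_mul]
        _ = Real.exp (m * (Real.exp (-lam) - 1)) := by rw [hm]; ring_nf
    have step4 : Real.exp (lam * (m - t₀)) * Real.exp (m * (Real.exp (-lam) - 1))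
        ≤ Real.exp (-a) := by
      rw [← Real.exp_add]
      apply Real.exp_le_exp.mpr
      have hquad := exp_neg_le_quad hlam0.le
      have hlm : lam * m = t₀ := by rw [hlam, div_mul_cancel₀ _ hm0.ne']
      have h1 : m * (Real.exp (-lam) - 1) ≤ m * (lam ^ 2 / 2 - lam) := by
        apply mul_le_mul_of_nonneg_left _ hm0.le
        linarith
      have hlt : lam * t₀ = 2 * a := by
        rw [hlam]
        field_simp
        nlinarith [ht₀sq]
      have h2 : lam * (m - t₀) + m * (lam ^ 2 / 2 - lam) = -a := by
        linear_combination (lam / 2) * hlm - (1 / 2) * hlt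
      linarith
    calc ∑ j ∈ (Finset.range (W + 1)).filter P,
        (W.choose j : ℝ) * p ^ j * (1 - p) ^ (W - j)
        ≤ Real.exp (lam * (m - t₀)) * (p * Real.exp (-lam) + q) ^ W := by
          rw [← step2]; exact step1
      _ ≤ Real.exp (lam * (m - t₀)) * Real.exp (m * (Real.exp (-lam) - 1)) :=
          mul_le_mul_of_nonneg_left step3 (Real.exp_pos _).le
      _ ≤ Real.exp (-a) := step4

theorem allocation_function_inversion
    {Ω : Type*} [MeasurableSpace Ω] (μ : Measure Ω) [IsProbabilityMeasure μ]
    (W : ℕ) (p : ℝ) (hp0 : 0 < p) (hp1 : p ≤ 1) (a : ℝ) (ha : 0 < a)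
    (X : Ω → ℕ) (hX : IsBinomial μ X W p)
    (f : ℝ → ℝ) (hf : ∀ s, f s = (s + a + Real.sqrt (a ^ 2 + 2 * s * a)) / p) :
    μ {ω | f (X ω : ℝ) < (W : ℝ)} ≤ ENNReal.ofReal (Real.exp (-a)) := by
  classical
  obtain ⟨hXm, hXd⟩ := hX
  set P : ℕ → Prop := fun j => f (j : ℝ) < (W : ℝ) with hP
  -- P j gives the key real inequality
  have hPiff : ∀ j : ℕ, P j → (j : ℝ) + a + Real.sqrt (a ^ 2 + 2 * j * a) < W * p := by
    intro j hj
    rw [hP] at hj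
    simp only [hf] at hj
    rw [div_lt_iff₀ hp0] at hj
    linarith
  -- event inclusion
  have hsub : {ω | f (X ω : ℝ) < (W : ℝ)} ⊆
      ⋃ j ∈ (Finset.range (W + 1)).filter P, {ω | X ω = j} := by
    intro ω hω
    simp only [Set.mem_setOf_eq] at hω
    have hPX : P (X ω) := hω
    have hjlt : X ω < W + 1 := by
      have := hPiff (X ω) hPX
      have hu : 0 ≤ Real.sqrt (a ^ 2 + 2 * (X ω) * a) := Real.sqrt_nonneg _
      have hWp : (W : ℝ) * p ≤ W := by
        nlinarith [Nat.cast_nonneg (α := ℝ) W]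
      have : (X ω : ℝ) < W := by linarith
      exact_mod_cast Nat.lt_succ_of_lt (by exact_mod_cast this)
    simp only [Set.mem_iUnion]
    exact ⟨X ω, by simp [Finset.mem_filter, Finset.mem_range, hjlt, hPX], rfl⟩
  calc μ {ω | f (X ω : ℝ) < (W : ℝ)}
      ≤ μ (⋃ j ∈ (Finset.range (W + 1)).filter P, {ω | X ω = j}) := measure_mono hsub
    _ ≤ ∑ j ∈ (Finset.range (W + 1)).filter P, μ {ω | X ω = j} :=
        measure_biUnion_finset_le _ _
    _ = ∑ j ∈ (Finset.range (W + 1)).filter P,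
          ENNReal.ofReal ((W.choose j : ℝ) * p ^ j * (1 - p) ^ (W - j)) := by
        exact Finset.sum_congr rfl fun j _ => hXd j
    _ = ENNReal.ofReal (∑ j ∈ (Finset.range (W + 1)).filter P,
          (W.choose j : ℝ) * p ^ j * (1 - p) ^ (W - j)) := by
        rw [ENNReal.ofReal_sum_of_nonneg]
        intro j _
        have : (0:ℝ) ≤ 1 - p := by linarith
        positivity
    _ ≤ ENNReal.ofReal (Real.exp (-a)) := by
        apply ENNReal.ofReal_le_ofReal
        exact chernoff_sum W p a hp0 hp1 ha P hPiff
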